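/- Let K be a field of odd characteristic and let E be an elliptic curve over K given by a Weierstrass equation with origin O. Let δ ≥ 1, d = 2^δ, and let t ∈ E(K) be a point of order d. For any scalars (f_l)_{l∈Z/dZ} and (g_l)_{l∈Z/dZ} in K, set F = ∑_{l∈Z/dZ} f_l u_l and G = ∑_{l∈Z/dZ} g_l u_l in L(⟨t⟩), and set C = ∑_{l∈Z/dZ} (f_l − f_{l−1})(g_l − g_{l−1}) x_l, where x_l = x∘τ_{−lt} and indices are taken modulo d. Then the difference F·G − C lies in L(⟨t⟩). -/

import Mathlib

noncomputable section

open WeierstrassCurve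

open scoped Classical

variable {K : Type*} [Field K]

/-- The `x`-coordinate of an affine point (junk value `0` at the point at infinity). -/
def ptX {W : Affine K} : W.Point → K
  | .zero => 0
  | @Affine.Point.some _ _ _ x _ _ => x

/-- The `y`-coordinate of an affine point (junk value `0` at the point at infinity). -/
def ptY {W : Affine K} : W.Point → K
  | .zero => 0
  | @Affine.Point.some _ _ _ _ y _ => y

/-- A model of the function field of the elliptic curve `W` over `K`, together with the
coordinate functions `x`, `y`, the pullbacks of functions along translations and negation,
the order of vanishing of a (nonzero) function at each rational point, and the evaluation of
a function at a rational point.  All the listed axioms hold for the genuine function field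
`K(E)` of `E = W`, where `τ A f = f ∘ (· + A)`, `ι f = f ∘ (-·)`, `ord P f` is the valuation
of `f` at `P`, and `eval P f` is the value `f(P)` (junk if `P` is a pole of `f`). -/
structure FunModel (W : Affine K) where
  /-- the function field -/
  F : Type*
  /-- `F` is a field -/
  fieldF : Field F
  /-- `F` is a `K`-algebra -/
  algebraF : Algebra K F
  /-- the coordinate function `x` -/
  x : F
  /-- the coordinate function `y` -/
  y : F
  /-- `x` and `y` satisfy the Weierstrass equation of `W` -/
  equation : y ^ 2 + algebraMap K F W.a₁ * x * y + algebraMap K F W.a₃ * y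
      = x ^ 3 + algebraMap K F W.a₂ * x ^ 2 + algebraMap K F W.a₄ * x + algebraMap K F W.a₆
  /-- the function field is generated over `K` by `x` and `y` -/
  adjoin_x_y : IntermediateField.adjoin K {x, y} = ⊤
  /-- pullback of a function along the translation map `P ↦ P + A` -/
  τ : W.Point → F ≃ₐ[K] F
  τ_zero : τ 0 = AlgEquiv.refl
  τ_add : ∀ A B : W.Point, τ (A + B) = (τ A).trans (τ B)
  /-- pullback of a function along the negation map `P ↦ -P` -/
  ι : F ≃ₐ[K] F
  ι_x : ι x = x
  ι_y : ι y = -y - algebraMap K F W.a₁ * x - algebraMap K F W.a₃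
  ι_τ : ∀ (A : W.Point) (f : F), ι (τ A f) = τ (-A) (ι f)
  /-- the order of vanishing at a rational point of a nonzero function
  (junk value at the zero function); poles have negative order -/
  ord : W.Point → F → ℤ
  ord_mul : ∀ (P : W.Point) (f g : F), f ≠ 0 → g ≠ 0 → ord P (f * g) = ord P f + ord P g
  ord_min_le_add : ∀ (P : W.Point) (f g : F), f ≠ 0 → g ≠ 0 → f + g ≠ 0 →
    min (ord P f) (ord P g) ≤ ord P (f + g)
  ord_algebraMap : ∀ (P : W.Point) (c : K), c ≠ 0 → ord P (algebraMap K F c) = 0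
  ord_τ : ∀ (A P : W.Point) (f : F), ord P (τ A f) = ord (P + A) f
  ord_ι : ∀ (P : W.Point) (f : F), ord P (ι f) = ord (-P) f
  ord_x_zero : ord 0 x = -2
  ord_y_zero : ord 0 y = -3
  ord_x_nonneg : ∀ P : W.Point, P ≠ 0 → 0 ≤ ord P x
  ord_y_nonneg : ∀ P : W.Point, P ≠ 0 → 0 ≤ ord P y
  ord_x_sub_pos : ∀ P : W.Point, P ≠ 0 → 0 < ord P (x - algebraMap K F (ptX P))
  /-- evaluation of a function at a rational point (junk value at poles) -/
  eval : W.Point → F → K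
  eval_algebraMap : ∀ (P : W.Point) (c : K), eval P (algebraMap K F c) = c
  eval_x : ∀ P : W.Point, P ≠ 0 → eval P x = ptX P
  eval_y : ∀ P : W.Point, P ≠ 0 → eval P y = ptY P
  eval_add : ∀ (P : W.Point) (f g : F), (f = 0 ∨ 0 ≤ ord P f) → (g = 0 ∨ 0 ≤ ord P g) →
    eval P (f + g) = eval P f + eval P g
  eval_mul : ∀ (P : W.Point) (f g : F), (f = 0 ∨ 0 ≤ ord P f) → (g = 0 ∨ 0 ≤ ord P g) →
    eval P (f * g) = eval P f * eval P g
  eval_τ : ∀ (A P : W.Point) (f : F), eval P (τ A f) = eval (P + A) f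
  eval_ι : ∀ (P : W.Point) (f : F), eval P (ι f) = eval (-P) f
  eval_eq_zero_iff : ∀ (P : W.Point) (f : F), f ≠ 0 → 0 ≤ ord P f →
    (eval P f = 0 ↔ 0 < ord P f)

attribute [instance] FunModel.fieldF FunModel.algebraF

/-- `Γ(A,B,C)`: the slope of the secant (or tangent) line to `W` through the points
`C - A` and `A - B`. -/
noncomputable def Γsec {K : Type*} [Field K] {W : WeierstrassCurve.Affine K}
    (A B C : W.Point) : K :=
  W.slope (ptX (C - A)) (ptX (A - B)) (ptY (C - A)) (ptY (A - B))

namespace FunModel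

variable {W : Affine K} (S : FunModel W)

/-- The translate `f_A = f ∘ τ_{-A}` of a function `f` by a point `A`. -/
def trN (A : W.Point) (f : S.F) : S.F := S.τ (-A) f

/-- The function `u_{A,B} = (y_A - y(A-B)) / (x_A - x(A-B))` attached to two distinct
points `A`, `B` of `W`. -/
def u (A B : W.Point) : S.F :=
  (S.trN A S.y - algebraMap K S.F (ptY (A - B))) /
    (S.trN A S.x - algebraMap K S.F (ptX (A - B)))

/-- The Riemann–Roch space (as a subset of the function field) of the divisor `D`,
a divisor being given as a finitely supported function `W.Point → ℤ`; membership of a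
nonzero `f` means `ord_P(f) + D(P) ≥ 0` for every point `P`. -/
def RRset (D : W.Point → ℤ) : Set S.F :=
  {f | f = 0 ∨ ∀ P : W.Point, -(D P) ≤ S.ord P f}


/-! ### Basic valuation toolkit -/

section Toolkit

variable {K : Type*} [Field K] {W : Affine K} (S : FunModel W)

/-- Regularity predicate: `f` vanishes or has order at least `n` at `P`. -/
def Reg (P : W.Point) (n : ℤ) (f : S.F) : Prop := f = 0 ∨ n ≤ S.ord P f

variable {S}

theorem ord_one (P : W.Point) : S.ord P 1 = 0 := by
  simpa using S.ord_algebraMap P 1 one_ne_zero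

theorem ord_inv (P : W.Point) {f : S.F} (hf : f ≠ 0) : S.ord P f⁻¹ = -S.ord P f := by
  have h := S.ord_mul P f f⁻¹ hf (inv_ne_zero hf)
  rw [mul_inv_cancel₀ hf, ord_one] at h
  omega

theorem ord_neg (P : W.Point) (f : S.F) : S.ord P (-f) = S.ord P f := by
  rcases eq_or_ne f 0 with rfl | hf
  · rw [neg_zero]
  · have : (-f : S.F) = algebraMap K S.F (-1) * f := by
      rw [map_neg, map_one, neg_one_mul]
    rw [this, S.ord_mul P _ f (by simp) hf, S.ord_algebraMap P (-1) (by norm_num)]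
    ring

theorem ord_smul (P : W.Point) {c : K} (hc : c ≠ 0) (f : S.F) :
    S.ord P (c • f) = S.ord P f := by
  rcases eq_or_ne f 0 with rfl | hf
  · rw [smul_zero]
  · rw [Algebra.smul_def, S.ord_mul P _ f (by
      simp only [ne_eq, map_eq_zero]; exact hc) hf, S.ord_algebraMap P c hc, zero_add]

theorem ord_pow (P : W.Point) {f : S.F} (hf : f ≠ 0) (n : ℕ) :
    S.ord P (f ^ n) = n * S.ord P f := by
  induction n with
  | zero => simpa using ord_one P
  | succ n ih =>
    rw [pow_succ, S.ord_mul P _ f (pow_ne_zero n hf) hf, ih]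
    push_cast
    ring

theorem ord_div (P : W.Point) {f g : S.F} (hf : f ≠ 0) (hg : g ≠ 0) :
    S.ord P (f / g) = S.ord P f - S.ord P g := by
  rw [div_eq_mul_inv, S.ord_mul P f g⁻¹ hf (inv_ne_zero hg), ord_inv P hg]
  ring

namespace Reg

theorem zero (P : W.Point) (n : ℤ) : Reg S P n (0 : S.F) := Or.inl rfl

theorem of_le {P : W.Point} {n : ℤ} {f : S.F} (h : n ≤ S.ord P f) :
    Reg S P n f := Or.inr h

theorem mono {P : W.Point} {m n : ℤ} {f : S.F} (h : Reg S P n f) (hmn : m ≤ n) :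
    Reg S P m f := h.imp id fun h' => le_trans hmn h'

theorem ord_of_ne {P : W.Point} {n : ℤ} {f : S.F} (h : Reg S P n f) (hf : f ≠ 0) :
    n ≤ S.ord P f := h.resolve_left hf

theorem add {P : W.Point} {n : ℤ} {f g : S.F} (hf : Reg S P n f) (hg : Reg S P n g) :
    Reg S P n (f + g) := by
  rcases eq_or_ne f 0 with rfl | hf0
  · simpa using hg
  rcases eq_or_ne g 0 with rfl | hg0
  · simpa using hf
  rcases eq_or_ne (f + g) 0 with h0 | h0
  · exact Or.inl h0
  exact Or.inr <| le_trans (le_min (hf.ord_of_ne hf0) (hg.ord_of_ne hg0))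
    (S.ord_min_le_add P f g hf0 hg0 h0)

theorem mul {P : W.Point} {m n : ℤ} {f g : S.F} (hf : Reg S P m f) (hg : Reg S P n g) :
    Reg S P (m + n) (f * g) := by
  rcases eq_or_ne f 0 with rfl | hf0
  · exact Or.inl (by rw [zero_mul])
  rcases eq_or_ne g 0 with rfl | hg0
  · exact Or.inl (by rw [mul_zero])
  exact Or.inr <| by
    rw [S.ord_mul P f g hf0 hg0]
    exact add_le_add (hf.ord_of_ne hf0) (hg.ord_of_ne hg0)

theorem smul {P : W.Point} {n : ℤ} {f : S.F} (c : K) (hf : Reg S P n f) :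
    Reg S P n (c • f) := by
  rcases eq_or_ne c 0 with rfl | hc
  · exact Or.inl (by rw [zero_smul])
  rcases hf with rfl | hf
  · exact Or.inl (by rw [smul_zero])
  · exact Or.inr (by rwa [ord_smul P hc])

theorem neg {P : W.Point} {n : ℤ} {f : S.F} (hf : Reg S P n f) : Reg S P n (-f) := by
  rcases hf with rfl | hf
  · exact Or.inl (by rw [neg_zero])
  · exact Or.inr (by rwa [ord_neg])

theorem sub {P : W.Point} {n : ℤ} {f g : S.F} (hf : Reg S P n f) (hg : Reg S P n g) :
    Reg S P n (f - g) := by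
  rw [sub_eq_add_neg]; exact hf.add hg.neg

theorem algebraMap' {P : W.Point} {n : ℤ} (c : K) (hn : n ≤ 0) :
    Reg S P n (algebraMap K S.F c) := by
  rcases eq_or_ne c 0 with rfl | hc
  · exact Or.inl (by rw [map_zero])
  · exact Or.inr (by rw [S.ord_algebraMap P c hc]; exact hn)

theorem one {P : W.Point} {n : ℤ} (hn : n ≤ 0) : Reg S P n (1 : S.F) := by
  simpa using algebraMap' (S := S) (P := P) 1 hn

theorem sum {P : W.Point} {n : ℤ} {ι : Type*} (s : Finset ι) (F : ι → S.F)
    (h : ∀ i ∈ s, Reg S P n (F i)) : Reg S P n (∑ i ∈ s, F i) := by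
  classical
  induction s using Finset.induction_on with
  | empty => simpa using Reg.zero P n
  | insert _ _ hns ih =>
    rw [Finset.sum_insert hns]
    exact (h _ (Finset.mem_insert_self _ _)).add
      (ih fun i hi => h i (Finset.mem_insert_of_mem hi))

end Reg

/-- Ultrametric equality: adding something of strictly bigger order keeps order and
nonvanishing. -/
theorem ord_add_eq_left {P : W.Point} {n : ℤ} {f g : S.F} (hf : f ≠ 0)
    (hg : Reg S P n g) (hlt : S.ord P f < n) :
    f + g ≠ 0 ∧ S.ord P (f + g) = S.ord P f := by
  rcases eq_or_ne g 0 with rfl | hg0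
  · simpa using hf
  have hg' : n ≤ S.ord P g := hg.ord_of_ne hg0
  have h0 : f + g ≠ 0 := by
    rintro h
    have : g = -f := by linear_combination h
    rw [this, ord_neg] at hg'
    omega
  refine ⟨h0, le_antisymm ?_ ?_⟩
  · have h2 : S.ord P f = S.ord P ((f + g) + (-g)) := by ring_nf
    have h3 := S.ord_min_le_add P (f + g) (-g) h0 (neg_ne_zero.mpr hg0) (by
      rw [add_neg_cancel_right]; exact hf)
    rw [add_neg_cancel_right, ord_neg] at h3
    omega
  · have h4 := S.ord_min_le_add P f g hf hg0 h0
    omega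

end Toolkit

/-! ### Evaluation toolkit -/

section EvalTk

variable {K : Type*} [Field K] {W : Affine K} {S : FunModel W}

theorem eval_zero (P : W.Point) : S.eval P (0 : S.F) = 0 := by
  simpa using S.eval_algebraMap P 0

theorem eval_one (P : W.Point) : S.eval P (1 : S.F) = 1 := by
  simpa using S.eval_algebraMap P 1

theorem eval_smul (P : W.Point) (c : K) {f : S.F} (hf : Reg S P 0 f) :
    S.eval P (c • f) = c * S.eval P f := by
  rw [Algebra.smul_def, S.eval_mul P _ f (Reg.algebraMap' c le_rfl) hf, S.eval_algebraMap]

theorem eval_neg (P : W.Point) {f : S.F} (hf : Reg S P 0 f) :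
    S.eval P (-f) = -S.eval P f := by
  have : (-f : S.F) = (-1 : K) • f := by simp
  rw [this, eval_smul P _ hf]; ring

theorem eval_sub (P : W.Point) {f g : S.F} (hf : Reg S P 0 f) (hg : Reg S P 0 g) :
    S.eval P (f - g) = S.eval P f - S.eval P g := by
  rw [sub_eq_add_neg, S.eval_add P f (-g) hf hg.neg, eval_neg P hg]; ring

theorem eval_sum (P : W.Point) {ι : Type*} (s : Finset ι) (F : ι → S.F)
    (h : ∀ i ∈ s, Reg S P 0 (F i)) :
    S.eval P (∑ i ∈ s, F i) = ∑ i ∈ s, S.eval P (F i) := by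
  classical
  induction s using Finset.induction_on with
  | empty => simpa using eval_zero P
  | insert _ _ hns ih =>
    rw [Finset.sum_insert hns, Finset.sum_insert hns,
      S.eval_add P _ _ (h _ (Finset.mem_insert_self _ _))
        (Reg.sum _ _ fun i hi => h i (Finset.mem_insert_of_mem hi)),
      ih fun i hi => h i (Finset.mem_insert_of_mem hi)]

/-- A function of positive order evaluates to zero. -/
theorem eval_of_pos {P : W.Point} {f : S.F} (hf : f ≠ 0) (h : 0 < S.ord P f) :
    S.eval P f = 0 :=
  (S.eval_eq_zero_iff P f hf (le_of_lt h)).mpr h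

/-- A regular function with nonzero value has order exactly zero. -/
theorem ord_eq_zero_of_eval_ne {P : W.Point} {f : S.F} (hf : Reg S P 0 f)
    (h : S.eval P f ≠ 0) : S.ord P f = 0 := by
  have hf0 : f ≠ 0 := by rintro rfl; exact h (eval_zero P)
  have h0 : 0 ≤ S.ord P f := hf.ord_of_ne hf0
  rcases lt_or_eq_of_le h0 with h1 | h1
  · exact absurd (eval_of_pos hf0 h1) h
  · omega

/-- A nonvanishing regular function with zero value has positive order. -/
theorem ord_pos_of_eval_eq {P : W.Point} {f : S.F} (hf0 : f ≠ 0) (h0 : 0 ≤ S.ord P f)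
    (h : S.eval P f = 0) : 0 < S.ord P f :=
  (S.eval_eq_zero_iff P f hf0 h0).mp h

end EvalTk

/-! ### Nondegeneracy of the coordinate functions -/

section Nondeg

variable {K : Type*} [Field K] {W : Affine K} {S : FunModel W}

theorem not_x_and_y_eq_zero : ¬(S.x = 0 ∧ S.y = 0) := by
  rintro ⟨hx, hy⟩
  have h1 := S.ord_x_zero
  have h2 := S.ord_y_zero
  rw [hx] at h1; rw [hy] at h2
  omega

theorem x_ne_zero : S.x ≠ 0 := by
  intro hx
  have hy : S.y ≠ 0 := fun hy => not_x_and_y_eq_zero ⟨hx, hy⟩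
  have hyc : ∀ c : K, S.y ≠ algebraMap K S.F c := by
    intro c hc
    rcases eq_or_ne c 0 with rfl | hc0
    · rw [map_zero] at hc; exact hy hc
    · have := S.ord_y_zero
      rw [hc, S.ord_algebraMap 0 c hc0] at this
      omega
  have heq : S.y * (S.y + algebraMap K S.F W.a₃) = algebraMap K S.F W.a₆ := by
    have := S.equation
    rw [hx] at this
    linear_combination this
  have hy3 : S.y + algebraMap K S.F W.a₃ ≠ 0 := by
    intro h
    exact hyc (-W.a₃) (by rw [map_neg]; linear_combination h)
  have hordy3 : S.ord 0 (S.y + algebraMap K S.F W.a₃) = -3 := by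
    have := ord_add_eq_left (P := (0 : W.Point)) (n := 0) hy
      (Reg.algebraMap' W.a₃ le_rfl) (by rw [S.ord_y_zero]; omega)
    rw [this.2, S.ord_y_zero]
  have hprod : S.ord 0 (S.y * (S.y + algebraMap K S.F W.a₃)) = -6 := by
    rw [S.ord_mul 0 _ _ hy hy3, S.ord_y_zero, hordy3]; ring
  rcases eq_or_ne W.a₆ 0 with h6 | h6
  · rw [h6, map_zero] at heq
    rcases mul_eq_zero.mp heq with h | h
    exacts [hy h, hy3 h]
  · rw [heq, S.ord_algebraMap 0 _ h6] at hprod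
    omega

theorem y_ne_zero : S.y ≠ 0 := by
  intro hy
  have hx : S.x ≠ 0 := fun hx => not_x_and_y_eq_zero ⟨hx, hy⟩
  have heq : S.x ^ 3 = -(algebraMap K S.F W.a₂ * S.x ^ 2 + algebraMap K S.F W.a₄ * S.x
      + algebraMap K S.F W.a₆) := by
    have := S.equation
    rw [hy] at this
    linear_combination -this
  have hreg : Reg S 0 (-4) (algebraMap K S.F W.a₂ * S.x ^ 2 + algebraMap K S.F W.a₄ * S.x
      + algebraMap K S.F W.a₆) := by
    have hx2 : Reg S 0 (-4) (algebraMap K S.F W.a₂ * S.x ^ 2) := by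
      have := (Reg.algebraMap' (S := S) (P := (0 : W.Point)) W.a₂ le_rfl).mul
        (Reg.of_le (f := S.x ^ 2) (by rw [ord_pow 0 hx 2, S.ord_x_zero]; norm_num) (n := -4))
      simpa using this
    have hx1 : Reg S 0 (-2) (algebraMap K S.F W.a₄ * S.x) := by
      have := (Reg.algebraMap' (S := S) (P := (0 : W.Point)) W.a₄ le_rfl).mul
        (Reg.of_le (f := S.x) (le_of_eq S.ord_x_zero.symm) (n := -2))
      simpa using this
    exact (hx2.add (hx1.mono (by omega))).add (Reg.algebraMap' _ (by omega))
  have h3 : S.ord 0 (S.x ^ 3) = -6 := by rw [ord_pow 0 hx 3, S.ord_x_zero]; ring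
  rcases hreg with h0 | h0
  · rw [h0, neg_zero] at heq
    exact hx (by rwa [pow_eq_zero_iff (three_ne_zero)] at heq)
  · rw [heq, ord_neg] at h3
    omega

theorem x_ne_const (c : K) : S.x ≠ algebraMap K S.F c := by
  intro h
  rcases eq_or_ne c 0 with rfl | hc
  · rw [map_zero] at h; exact x_ne_zero h
  · have := S.ord_x_zero
    rw [h, S.ord_algebraMap 0 c hc] at this
    omega

theorem y_ne_const (c : K) : S.y ≠ algebraMap K S.F c := by
  intro h
  rcases eq_or_ne c 0 with rfl | hc
  · rw [map_zero] at h; exact y_ne_zero h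
  · have := S.ord_y_zero
    rw [h, S.ord_algebraMap 0 c hc] at this
    omega

theorem x_sub_const_ne (c : K) : S.x - algebraMap K S.F c ≠ 0 :=
  sub_ne_zero_of_ne (x_ne_const c)

theorem y_sub_const_ne (c : K) : S.y - algebraMap K S.F c ≠ 0 :=
  sub_ne_zero_of_ne (y_ne_const c)

theorem ord_zero_x_sub_const (c : K) : S.ord 0 (S.x - algebraMap K S.F c) = -2 := by
  rw [sub_eq_add_neg, ← map_neg]
  have := ord_add_eq_left (P := (0 : W.Point)) (n := 0) x_ne_zero
    (Reg.algebraMap' (-c) le_rfl) (by rw [S.ord_x_zero]; omega)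
  rw [this.2, S.ord_x_zero]

theorem ord_zero_y_sub_const (c : K) : S.ord 0 (S.y - algebraMap K S.F c) = -3 := by
  rw [sub_eq_add_neg, ← map_neg]
  have := ord_add_eq_left (P := (0 : W.Point)) (n := 0) y_ne_zero
    (Reg.algebraMap' (-c) le_rfl) (by rw [S.ord_y_zero]; omega)
  rw [this.2, S.ord_y_zero]

theorem tau_ne_zero {A : W.Point} {f : S.F} (hf : f ≠ 0) : S.τ A f ≠ 0 := by
  intro h
  exact hf <| by simpa using (S.τ A).injective (h.trans (map_zero (S.τ A)).symm)

theorem ord_x_div_y : S.ord 0 (S.x / S.y) = 1 := by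
  rw [ord_div 0 x_ne_zero y_ne_zero, S.ord_x_zero, S.ord_y_zero]
  ring

end Nondeg

/-! ### The master lemma: local uniformizers at affine points -/

section Master

variable {K : Type*} [Field K] {W : Affine K} {S : FunModel W}

theorem x_mem_adjoin : S.x ∈ Algebra.adjoin K {S.x, S.y} :=
  Algebra.subset_adjoin (by simp)

theorem y_mem_adjoin : S.y ∈ Algebra.adjoin K {S.x, S.y} :=
  Algebra.subset_adjoin (by simp)

/-- Elements of the affine coordinate ring are regular away from the origin. -/
theorem reg_of_mem_adjoin {r : S.F} (hr : r ∈ Algebra.adjoin K {S.x, S.y})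
    {Q : W.Point} (hQ0 : Q ≠ 0) : Reg S Q 0 r := by
  induction hr using Algebra.adjoin_induction with
  | mem r hr =>
    rcases hr with rfl | hr
    · exact Reg.of_le (S.ord_x_nonneg Q hQ0)
    · rw [Set.mem_singleton_iff] at hr
      subst hr
      exact Reg.of_le (S.ord_y_nonneg Q hQ0)
  | algebraMap c => exact Reg.algebraMap' c le_rfl
  | add f g hf hg ihf ihg => exact ihf.add ihg
  | mul f g hf hg ihf ihg => simpa using ihf.mul ihg

/-- Every element of the function field is a ratio of elements of the affine
coordinate ring. -/
theorem frac_rep (f : S.F) : ∃ r s, r ∈ Algebra.adjoin K {S.x, S.y} ∧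
    s ∈ Algebra.adjoin K {S.x, S.y} ∧ s ≠ 0 ∧ f = r / s := by
  classical
  set R := Algebra.adjoin K {S.x, S.y} with hR
  let T : Subfield S.F :=
    { carrier := {f | ∃ r s, r ∈ R ∧ s ∈ R ∧ s ≠ 0 ∧ f = r / s}
      zero_mem' := ⟨0, 1, Subalgebra.zero_mem R, Subalgebra.one_mem R, one_ne_zero, by simp⟩
      one_mem' := ⟨1, 1, Subalgebra.one_mem R, Subalgebra.one_mem R, one_ne_zero, by simp⟩
      add_mem' := by
        rintro a b ⟨r, s, hr, hs, hs0, rfl⟩ ⟨r', s', hr', hs', hs0', rfl⟩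
        exact ⟨r * s' + r' * s, s * s', Subalgebra.add_mem R (Subalgebra.mul_mem R hr hs')
          (Subalgebra.mul_mem R hr' hs), Subalgebra.mul_mem R hs hs',
          mul_ne_zero hs0 hs0', by field_simp⟩
      mul_mem' := by
        rintro a b ⟨r, s, hr, hs, hs0, rfl⟩ ⟨r', s', hr', hs', hs0', rfl⟩
        exact ⟨r * r', s * s', Subalgebra.mul_mem R hr hr', Subalgebra.mul_mem R hs hs',
          mul_ne_zero hs0 hs0', by field_simp⟩
      neg_mem' := by
        rintro a ⟨r, s, hr, hs, hs0, rfl⟩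
        exact ⟨-r, s, Subalgebra.neg_mem R hr, hs, hs0, by ring⟩
      inv_mem' := by
        rintro a ⟨r, s, hr, hs, hs0, rfl⟩
        rcases eq_or_ne r 0 with rfl | hr0
        · exact ⟨0, 1, Subalgebra.zero_mem R, Subalgebra.one_mem R, one_ne_zero, by simp⟩
        · exact ⟨s, r, hs, hr, hr0, by rw [inv_div]⟩ }
  have halg : ∀ c : K, algebraMap K S.F c ∈ T :=
    fun c => ⟨algebraMap K S.F c, 1, Subalgebra.algebraMap_mem R c, Subalgebra.one_mem R,
      one_ne_zero, by simp⟩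
  have hT : IntermediateField.adjoin K {S.x, S.y} ≤ Subfield.toIntermediateField T halg := by
    rw [IntermediateField.adjoin_le_iff]
    rintro f (rfl | hf)
    · exact ⟨S.x, 1, x_mem_adjoin, Subalgebra.one_mem R, one_ne_zero, by simp⟩
    · rw [Set.mem_singleton_iff] at hf
      subst hf
      exact ⟨S.y, 1, y_mem_adjoin, Subalgebra.one_mem R, one_ne_zero, by simp⟩
  rw [S.adjoin_x_y] at hT
  exact hT (IntermediateField.mem_top (x := f))

/-- Taylor-type decomposition of an element of the coordinate ring at `(x₀, y₀)`. -/
theorem adjoin_rep (x₀ y₀ : K) {r : S.F} (hr : r ∈ Algebra.adjoin K {S.x, S.y}) :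
    ∃ c α β, α ∈ Algebra.adjoin K {S.x, S.y} ∧ β ∈ Algebra.adjoin K {S.x, S.y} ∧
      r = algebraMap K S.F c + α * (S.x - algebraMap K S.F x₀)
        + β * (S.y - algebraMap K S.F y₀) := by
  induction hr using Algebra.adjoin_induction with
  | mem r hr =>
    rcases hr with rfl | hr
    · exact ⟨x₀, 1, 0, Subalgebra.one_mem _, Subalgebra.zero_mem _, by ring⟩
    · rw [Set.mem_singleton_iff] at hr
      subst hr
      exact ⟨y₀, 0, 1, Subalgebra.zero_mem _, Subalgebra.one_mem _, by ring⟩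
  | algebraMap c => exact ⟨c, 0, 0, Subalgebra.zero_mem _, Subalgebra.zero_mem _, by ring⟩
  | add f g hf hg ihf ihg =>
    obtain ⟨c, α, β, hα, hβ, h⟩ := ihf
    obtain ⟨c', α', β', hα', hβ', h'⟩ := ihg
    exact ⟨c + c', α + α', β + β', Subalgebra.add_mem _ hα hα', Subalgebra.add_mem _ hβ hβ',
      by rw [h, h', map_add]; ring⟩
  | mul f g hf hg ihf ihg =>
    obtain ⟨c, α, β, hα, hβ, h⟩ := ihf
    obtain ⟨c', α', β', hα', hβ', h'⟩ := ihg
    refine ⟨c * c',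
      algebraMap K S.F c * α' + algebraMap K S.F c' * α
        + α * (α' * (S.x - algebraMap K S.F x₀) + β' * (S.y - algebraMap K S.F y₀)),
      algebraMap K S.F c * β' + algebraMap K S.F c' * β
        + β * (α' * (S.x - algebraMap K S.F x₀) + β' * (S.y - algebraMap K S.F y₀)),
      ?_, ?_, ?_⟩
    · refine Subalgebra.add_mem _ (Subalgebra.add_mem _
        (Subalgebra.mul_mem _ (Subalgebra.algebraMap_mem _ c) hα')
        (Subalgebra.mul_mem _ (Subalgebra.algebraMap_mem _ c') hα)) (Subalgebra.mul_mem _ hα ?_)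
      exact Subalgebra.add_mem _
        (Subalgebra.mul_mem _ hα' (Subalgebra.sub_mem _ x_mem_adjoin
          (Subalgebra.algebraMap_mem _ x₀)))
        (Subalgebra.mul_mem _ hβ' (Subalgebra.sub_mem _ y_mem_adjoin
          (Subalgebra.algebraMap_mem _ y₀)))
    · refine Subalgebra.add_mem _ (Subalgebra.add_mem _
        (Subalgebra.mul_mem _ (Subalgebra.algebraMap_mem _ c) hβ')
        (Subalgebra.mul_mem _ (Subalgebra.algebraMap_mem _ c') hβ)) (Subalgebra.mul_mem _ hβ ?_)
      exact Subalgebra.add_mem _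
        (Subalgebra.mul_mem _ hα' (Subalgebra.sub_mem _ x_mem_adjoin
          (Subalgebra.algebraMap_mem _ x₀)))
        (Subalgebra.mul_mem _ hβ' (Subalgebra.sub_mem _ y_mem_adjoin
          (Subalgebra.algebraMap_mem _ y₀)))
    · rw [h, h', map_mul]; ring

end Master

/-! ### The swallowing argument -/

section Master2

variable {K : Type*} [Field K] {W : Affine K} {S : FunModel W}

/-- Abbreviations for the local data at an affine point. -/
theorem eval_x_sub (Q : W.Point) (hQ0 : Q ≠ 0) :
    S.eval Q (S.x - algebraMap K S.F (ptX Q)) = 0 := by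
  rw [eval_sub Q (Reg.of_le (S.ord_x_nonneg Q hQ0)) (Reg.algebraMap' _ le_rfl),
    S.eval_x Q hQ0, S.eval_algebraMap, sub_self]

theorem eval_y_sub (Q : W.Point) (hQ0 : Q ≠ 0) :
    S.eval Q (S.y - algebraMap K S.F (ptY Q)) = 0 := by
  rw [eval_sub Q (Reg.of_le (S.ord_y_nonneg Q hQ0)) (Reg.algebraMap' _ le_rfl),
    S.eval_y Q hQ0, S.eval_algebraMap, sub_self]

theorem ord_x_sub_pos' (Q : W.Point) (hQ0 : Q ≠ 0) :
    0 < S.ord Q (S.x - algebraMap K S.F (ptX Q)) :=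
  ord_pos_of_eval_eq (x_sub_const_ne _)
    (((Reg.of_le (S.ord_x_nonneg Q hQ0)).sub (Reg.algebraMap' _ le_rfl)).ord_of_ne
      (x_sub_const_ne _))
    (eval_x_sub Q hQ0)

theorem ord_y_sub_pos' (Q : W.Point) (hQ0 : Q ≠ 0) :
    0 < S.ord Q (S.y - algebraMap K S.F (ptY Q)) :=
  ord_pos_of_eval_eq (y_sub_const_ne _)
    (((Reg.of_le (S.ord_y_nonneg Q hQ0)).sub (Reg.algebraMap' _ le_rfl)).ord_of_ne
      (y_sub_const_ne _))
    (eval_y_sub Q hQ0)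

/-- The swallowing lemma: given the uniformizer candidate `ξ'` which divides the other
generator `η'` of the maximal ideal (witnessed by `η' * V = ξ' * U`), every nonzero element
of the coordinate ring has order a multiple of `ord ξ'`. -/
theorem swallow {Q : W.Point} (hQ0 : Q ≠ 0) {ξ' η' U V : S.F}
    (hpair : (ξ' = S.x - algebraMap K S.F (ptX Q) ∧ η' = S.y - algebraMap K S.F (ptY Q)) ∨
      (ξ' = S.y - algebraMap K S.F (ptY Q) ∧ η' = S.x - algebraMap K S.F (ptX Q)))
    (hUR : U ∈ Algebra.adjoin K {S.x, S.y}) (hVR : V ∈ Algebra.adjoin K {S.x, S.y})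
    (hV : S.eval Q V ≠ 0) (hid : η' * V = ξ' * U) :
    ∀ r : S.F, r ∈ Algebra.adjoin K {S.x, S.y} → r ≠ 0 →
      ∃ n : ℕ, S.ord Q r = n * S.ord Q ξ' := by
  have hξ0 : ξ' ≠ 0 := by
    rcases hpair with ⟨rfl, -⟩ | ⟨rfl, -⟩
    exacts [x_sub_const_ne _, y_sub_const_ne _]
  have hordξ : 1 ≤ S.ord Q ξ' := by
    rcases hpair with ⟨rfl, -⟩ | ⟨rfl, -⟩
    exacts [ord_x_sub_pos' Q hQ0, ord_y_sub_pos' Q hQ0]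
  have hV0 : V ≠ 0 := by rintro rfl; exact hV (eval_zero Q)
  have hordV : S.ord Q V = 0 := ord_eq_zero_of_eval_ne (reg_of_mem_adjoin hVR hQ0) hV
  -- main claim by strong induction on the order
  suffices H : ∀ N : ℕ, ∀ r : S.F, r ∈ Algebra.adjoin K {S.x, S.y} → r ≠ 0 →
      (S.ord Q r).toNat = N → ∃ n : ℕ, S.ord Q r = n * S.ord Q ξ' by
    intro r hrR hr0
    exact H (S.ord Q r).toNat r hrR hr0 rfl
  intro N
  induction N using Nat.strong_induction_on with
  | _ N ih =>
    intro r hrR hr0 hN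
    have hordr : 0 ≤ S.ord Q r := (reg_of_mem_adjoin hrR hQ0).ord_of_ne hr0
    rcases eq_or_ne (S.eval Q r) 0 with he | he
    · -- the element vanishes at Q: swallow one factor of ξ'
      obtain ⟨c, α, β, hα, hβ, hrep⟩ := adjoin_rep (ptX Q) (ptY Q) hrR
      have hc : c = 0 := by
        have h1 : S.eval Q r = c := by
          rw [hrep, S.eval_add Q _ _ (Reg.add (Reg.algebraMap' _ le_rfl)
              ((reg_of_mem_adjoin hα hQ0).mul
                ((Reg.of_le (S.ord_x_nonneg Q hQ0)).sub (Reg.algebraMap' _ le_rfl))))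
              ((reg_of_mem_adjoin hβ hQ0).mul
                ((Reg.of_le (S.ord_y_nonneg Q hQ0)).sub (Reg.algebraMap' _ le_rfl))),
            S.eval_add Q _ _ (Reg.algebraMap' _ le_rfl)
              ((reg_of_mem_adjoin hα hQ0).mul
                ((Reg.of_le (S.ord_x_nonneg Q hQ0)).sub (Reg.algebraMap' _ le_rfl))),
            S.eval_mul Q _ _ (reg_of_mem_adjoin hα hQ0)
              ((Reg.of_le (S.ord_x_nonneg Q hQ0)).sub (Reg.algebraMap' _ le_rfl)),
            S.eval_mul Q _ _ (reg_of_mem_adjoin hβ hQ0)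
              ((Reg.of_le (S.ord_y_nonneg Q hQ0)).sub (Reg.algebraMap' _ le_rfl)),
            eval_x_sub Q hQ0, eval_y_sub Q hQ0, S.eval_algebraMap]
          ring
        rw [h1] at he
        exact he
      -- r = α'' ξ' + β'' η' for suitable α'' β''
      obtain ⟨α', β', hα', hβ', hrep'⟩ :
          ∃ α' β', α' ∈ Algebra.adjoin K {S.x, S.y} ∧ β' ∈ Algebra.adjoin K {S.x, S.y} ∧
            r = α' * ξ' + β' * η' := by
        rcases hpair with ⟨hξ, hη⟩ | ⟨hξ, hη⟩
        · exact ⟨α, β, hα, hβ, by rw [hrep, hc, map_zero, hξ, hη]; ring⟩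
        · exact ⟨β, α, hβ, hα, by rw [hrep, hc, map_zero, hξ, hη]; ring⟩
      set r₁ : S.F := α' * V + β' * U with hr₁def
      have hr₁R : r₁ ∈ Algebra.adjoin K {S.x, S.y} :=
        Subalgebra.add_mem _ (Subalgebra.mul_mem _ hα' hVR) (Subalgebra.mul_mem _ hβ' hUR)
      have hkey : r * V = ξ' * r₁ := by
        rw [hrep', hr₁def]
        have : β' * η' * V = β' * (ξ' * U) := by rw [← hid]; ring
        linear_combination this
      have hr₁0 : r₁ ≠ 0 := by
        rintro h
        rw [h, mul_zero] at hkey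
        exact hr0 ((mul_eq_zero.mp hkey).resolve_right hV0)
      have hords : S.ord Q r = S.ord Q ξ' + S.ord Q r₁ := by
        have h1 := S.ord_mul Q r V hr0 hV0
        have h2 := S.ord_mul Q ξ' r₁ hξ0 hr₁0
        rw [hkey] at h1
        omega
      have hordr₁ : 0 ≤ S.ord Q r₁ := (reg_of_mem_adjoin hr₁R hQ0).ord_of_ne hr₁0
      have hlt : (S.ord Q r₁).toNat < N := by omega
      obtain ⟨n, hn⟩ := ih _ hlt r₁ hr₁R hr₁0 rfl
      exact ⟨n + 1, by rw [hords, hn]; push_cast; ring⟩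
    · -- nonvanishing: order zero
      exact ⟨0, by rw [ord_eq_zero_of_eval_ne (reg_of_mem_adjoin hrR hQ0) he]; simp⟩

/-- The master lemma: `ξ'` is a uniformizer at `Q`. -/
theorem master_uniformizer {Q : W.Point} (hQ0 : Q ≠ 0) {ξ' η' U V : S.F}
    (hpair : (ξ' = S.x - algebraMap K S.F (ptX Q) ∧ η' = S.y - algebraMap K S.F (ptY Q)) ∨
      (ξ' = S.y - algebraMap K S.F (ptY Q) ∧ η' = S.x - algebraMap K S.F (ptX Q)))
    (hUR : U ∈ Algebra.adjoin K {S.x, S.y}) (hVR : V ∈ Algebra.adjoin K {S.x, S.y})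
    (hV : S.eval Q V ≠ 0) (hid : η' * V = ξ' * U) :
    S.ord Q ξ' = 1 := by
  have hordξ : 1 ≤ S.ord Q ξ' := by
    rcases hpair with ⟨rfl, -⟩ | ⟨rfl, -⟩
    exacts [ord_x_sub_pos' Q hQ0, ord_y_sub_pos' Q hQ0]
  -- the local parameter supplied by translation
  set z : S.F := S.τ (-Q) (S.x / S.y) with hz
  have hz0 : z ≠ 0 := tau_ne_zero (div_ne_zero x_ne_zero y_ne_zero)
  have hordz : S.ord Q z = 1 := by
    rw [hz, S.ord_τ (-Q) Q _, add_neg_cancel, ord_x_div_y]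
  obtain ⟨r, s, hrR, hsR, hs0, hzrs⟩ := frac_rep z
  have hr0 : r ≠ 0 := by
    rintro rfl
    rw [zero_div] at hzrs
    exact hz0 hzrs
  obtain ⟨n, hn⟩ := swallow hQ0 hpair hUR hVR hV hid r hrR hr0
  obtain ⟨m, hm⟩ := swallow hQ0 hpair hUR hVR hV hid s hsR hs0
  have : (1 : ℤ) = (n - m : ℤ) * S.ord Q ξ' := by
    rw [← hordz, hzrs, ord_div Q hr0 hs0, hn, hm]
    ring
  have hdvd : S.ord Q ξ' ∣ 1 := Dvd.intro_left _ this.symm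
  rcases Int.isUnit_iff.mp (isUnit_of_dvd_one hdvd) with h | h
  · exact h
  · omega

end Master2

/-! ### Uniformizers at affine points -/

section Uniformizers

variable {K : Type*} [Field K] {W : Affine K} {S : FunModel W}

@[simp] theorem ptX_some {x y : K} (h : W.Nonsingular x y) :
    ptX (Affine.Point.some _ _ h) = x := rfl

@[simp] theorem ptY_some {x y : K} (h : W.Nonsingular x y) :
    ptY (Affine.Point.some _ _ h) = y := rfl

theorem eval_of_rep {Q : W.Point} (hQ0 : Q ≠ 0) {f α β : S.F} (c : K)
    (hα : Reg S Q 0 α) (hβ : Reg S Q 0 β)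
    (hf : f = algebraMap K S.F c + α * (S.x - algebraMap K S.F (ptX Q))
      + β * (S.y - algebraMap K S.F (ptY Q))) :
    S.eval Q f = c := by
  have hxreg : Reg S Q 0 (S.x - algebraMap K S.F (ptX Q)) :=
    (Reg.of_le (S.ord_x_nonneg Q hQ0)).sub (Reg.algebraMap' _ le_rfl)
  have hyreg : Reg S Q 0 (S.y - algebraMap K S.F (ptY Q)) :=
    (Reg.of_le (S.ord_y_nonneg Q hQ0)).sub (Reg.algebraMap' _ le_rfl)
  have hαx : Reg S Q 0 (α * (S.x - algebraMap K S.F (ptX Q))) := by simpa using hα.mul hxreg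
  have hβy : Reg S Q 0 (β * (S.y - algebraMap K S.F (ptY Q))) := by simpa using hβ.mul hyreg
  rw [hf, S.eval_add Q _ _ ((Reg.algebraMap' _ le_rfl).add hαx) hβy,
    S.eval_add Q _ _ (Reg.algebraMap' _ le_rfl) hαx,
    S.eval_mul Q _ _ hα hxreg, S.eval_mul Q _ _ hβ hyreg,
    eval_x_sub Q hQ0, eval_y_sub Q hQ0, S.eval_algebraMap]
  ring

/-- The quadratic-in-`y` identity coming from the Weierstrass equation. -/
theorem curve_identity {x₀ y₀ : K} (hpt : W.Equation x₀ y₀) :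
    (S.y - algebraMap K S.F y₀) *
        ((S.y - algebraMap K S.F y₀) + algebraMap K S.F (2 * y₀ + W.a₁ * x₀ + W.a₃)) =
      (S.x - algebraMap K S.F x₀) *
        (S.x ^ 2 + algebraMap K S.F x₀ * S.x + algebraMap K S.F (x₀ ^ 2)
          + algebraMap K S.F W.a₂ * (S.x + algebraMap K S.F x₀) + algebraMap K S.F W.a₄
          - algebraMap K S.F W.a₁ * S.y) := by
  have hpt' := congrArg (algebraMap K S.F) ((W.equation_iff x₀ y₀).mp hpt)
  simp only [map_add, map_mul, map_pow, map_ofNat] at hpt'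
  simp only [map_add, map_mul, map_pow, map_ofNat]
  linear_combination S.equation - hpt'

/-- Membership of the auxiliary quadratic in the coordinate ring. -/
theorem g_mem_adjoin (x₀ : K) :
    S.x ^ 2 + algebraMap K S.F x₀ * S.x + algebraMap K S.F (x₀ ^ 2)
        + algebraMap K S.F W.a₂ * (S.x + algebraMap K S.F x₀) + algebraMap K S.F W.a₄
        - algebraMap K S.F W.a₁ * S.y ∈ Algebra.adjoin K {S.x, S.y} := by
  refine Subalgebra.sub_mem _ (Subalgebra.add_mem _ (Subalgebra.add_mem _
    (Subalgebra.add_mem _ (Subalgebra.add_mem _ (Subalgebra.pow_mem _ x_mem_adjoin 2)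
      (Subalgebra.mul_mem _ (Subalgebra.algebraMap_mem _ _) x_mem_adjoin))
      (Subalgebra.algebraMap_mem _ _))
    (Subalgebra.mul_mem _ (Subalgebra.algebraMap_mem _ _)
      (Subalgebra.add_mem _ x_mem_adjoin (Subalgebra.algebraMap_mem _ _))))
    (Subalgebra.algebraMap_mem _ _))
    (Subalgebra.mul_mem _ (Subalgebra.algebraMap_mem _ _) y_mem_adjoin)

/-- The value of the auxiliary quadratic at the point. -/
theorem eval_g {x₀ y₀ : K} (h : W.Nonsingular x₀ y₀) :
    S.eval (Affine.Point.some _ _ h)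
      (S.x ^ 2 + algebraMap K S.F x₀ * S.x + algebraMap K S.F (x₀ ^ 2)
        + algebraMap K S.F W.a₂ * (S.x + algebraMap K S.F x₀) + algebraMap K S.F W.a₄
        - algebraMap K S.F W.a₁ * S.y) = 3 * x₀ ^ 2 + 2 * W.a₂ * x₀ + W.a₄ - W.a₁ * y₀ := by
  have hQ0 : (Affine.Point.some _ _ h : W.Point) ≠ 0 := Affine.Point.some_ne_zero h
  refine eval_of_rep hQ0 _ ?_ ?_ ?_
    (α := S.x + algebraMap K S.F (2 * x₀) + algebraMap K S.F W.a₂)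
    (β := algebraMap K S.F (-W.a₁))
  · exact ((Reg.of_le (S.ord_x_nonneg _ hQ0)).add (Reg.algebraMap' _ le_rfl)).add
      (Reg.algebraMap' _ le_rfl)
  · exact Reg.algebraMap' _ le_rfl
  · rw [ptX_some, ptY_some]
    simp only [map_add, map_mul, map_pow, map_sub, map_neg, map_ofNat]
    ring

/-- At a non-2-torsion affine point, `x - x₀` is a uniformizer. -/
theorem ord_x_sub_eq_one {x₀ y₀ : K} (h : W.Nonsingular x₀ y₀)
    (h2 : (Affine.Point.some _ _ h : W.Point) ≠ -Affine.Point.some _ _ h) :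
    S.ord (Affine.Point.some _ _ h) (S.x - algebraMap K S.F x₀) = 1 := by
  have hQ0 : (Affine.Point.some _ _ h : W.Point) ≠ 0 := Affine.Point.some_ne_zero h
  have hc : 2 * y₀ + W.a₁ * x₀ + W.a₃ ≠ 0 := by
    intro hc0
    refine h2 ?_
    rw [Affine.Point.neg_some, Affine.Point.some.injEq]
    refine ⟨rfl, ?_⟩
    simp only [Affine.negY]
    linear_combination hc0
  set c : K := 2 * y₀ + W.a₁ * x₀ + W.a₃ with hcdef
  have hV : S.eval (Affine.Point.some _ _ h)
      ((S.y - algebraMap K S.F y₀) + algebraMap K S.F c) = c := by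
    refine eval_of_rep hQ0 c (Reg.zero _ _) (Reg.one le_rfl) ?_
    rw [ptX_some, ptY_some]
    ring
  refine master_uniformizer hQ0 (Or.inl ⟨rfl, rfl⟩) (g_mem_adjoin x₀)
    (Subalgebra.add_mem _ (Subalgebra.sub_mem _ y_mem_adjoin (Subalgebra.algebraMap_mem _ _))
      (Subalgebra.algebraMap_mem _ _))
    (by rw [hV]; exact hc) ?_
  exact curve_identity h.1

/-- At a 2-torsion affine point, `y - y₀` is a uniformizer and `x - x₀` has order two. -/
theorem ord_two_torsion {x₀ y₀ : K} (h : W.Nonsingular x₀ y₀)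
    (h2 : (Affine.Point.some _ _ h : W.Point) = -Affine.Point.some _ _ h) :
    S.ord (Affine.Point.some _ _ h) (S.y - algebraMap K S.F y₀) = 1 ∧
      S.ord (Affine.Point.some _ _ h) (S.x - algebraMap K S.F x₀) = 2 := by
  have hQ0 : (Affine.Point.some _ _ h : W.Point) ≠ 0 := Affine.Point.some_ne_zero h
  have hc : 2 * y₀ + W.a₁ * x₀ + W.a₃ = 0 := by
    rw [Affine.Point.neg_some, Affine.Point.some.injEq] at h2
    simp only [Affine.negY] at h2
    linear_combination h2.2
  set g : S.F := S.x ^ 2 + algebraMap K S.F x₀ * S.x + algebraMap K S.F (x₀ ^ 2)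
    + algebraMap K S.F W.a₂ * (S.x + algebraMap K S.F x₀) + algebraMap K S.F W.a₄
    - algebraMap K S.F W.a₁ * S.y with hgdef
  have hgval : S.eval (Affine.Point.some _ _ h) g = 3 * x₀ ^ 2 + 2 * W.a₂ * x₀ + W.a₄ - W.a₁ * y₀ :=
    eval_g h
  have hgne : S.eval (Affine.Point.some _ _ h) g ≠ 0 := by
    rw [hgval]
    rcases h.2 with hX | hY
    · rw [Affine.evalEval_polynomialX] at hX
      intro h0
      exact hX (by linear_combination -h0)
    · exfalso
      rw [Affine.evalEval_polynomialY] at hY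
      exact hY hc
  have hid : (S.x - algebraMap K S.F x₀) * g =
      (S.y - algebraMap K S.F y₀) * (S.y - algebraMap K S.F y₀) := by
    have := curve_identity (S := S) h.1
    rw [hc, map_zero, add_zero] at this
    rw [← this]
  have hordy : S.ord (Affine.Point.some _ _ h) (S.y - algebraMap K S.F y₀) = 1 :=
    master_uniformizer hQ0 (Or.inr ⟨rfl, rfl⟩) (Subalgebra.sub_mem _ y_mem_adjoin
      (Subalgebra.algebraMap_mem _ _)) (g_mem_adjoin x₀) hgne hid
  refine ⟨hordy, ?_⟩
  have hg0 : g ≠ 0 := fun h0 => hgne (by rw [h0]; exact eval_zero _)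
  have hordg : S.ord (Affine.Point.some _ _ h) g = 0 :=
    ord_eq_zero_of_eval_ne (reg_of_mem_adjoin (g_mem_adjoin x₀) hQ0) hgne
  have h1 := S.ord_mul (Affine.Point.some _ _ h) _ _ (x_sub_const_ne (S := S) x₀) hg0
  have h2' := S.ord_mul (Affine.Point.some _ _ h) _ _ (y_sub_const_ne (S := S) y₀)
    (y_sub_const_ne (S := S) y₀)
  rw [hid] at h1
  omega

end Uniformizers

/-! ### Point lemmas -/

section Points

variable {K : Type*} [Field K] {W : Affine K}

theorem point_exists_some {P : W.Point} (hP : P ≠ 0) :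
    ∃ (x y : K) (h : W.Nonsingular x y), P = Affine.Point.some _ _ h := by
  cases P with
  | zero => exact absurd rfl hP
  | some _ _ h => exact ⟨_, _, h, rfl⟩

theorem eq_or_eq_neg_of_ptX_eq {P Q : W.Point} (hP : P ≠ 0) (hQ : Q ≠ 0)
    (h : ptX P = ptX Q) : P = Q ∨ P = -Q := by
  obtain ⟨x₁, y₁, h₁, rfl⟩ := point_exists_some hP
  obtain ⟨x₂, y₂, h₂, rfl⟩ := point_exists_some hQ
  rw [ptX_some, ptX_some] at h
  subst h
  have e₁ := (W.equation_iff x₁ y₁).mp h₁.1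
  have e₂ := (W.equation_iff x₁ y₂).mp h₂.1
  have hfac : (y₁ - y₂) * (y₁ + y₂ + W.a₁ * x₁ + W.a₃) = 0 := by
    linear_combination e₁ - e₂
  rcases mul_eq_zero.mp hfac with h0 | h0
  · left
    rw [Affine.Point.some.injEq]
    exact ⟨rfl, by linear_combination h0⟩
  · right
    rw [Affine.Point.neg_some, Affine.Point.some.injEq]
    refine ⟨rfl, ?_⟩
    simp only [Affine.negY]
    linear_combination h0

theorem ptX_neg (P : W.Point) : ptX (-P) = ptX P := by
  cases P with
  | zero => rfl
  | some _ _ h => rw [Affine.Point.neg_some, ptX_some, ptX_some]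

end Points

/-! ### Local analysis of the slope functions -/

section UAnalysis

variable {K : Type*} [Field K] {W : Affine K} {S : FunModel W}

/-- `u A B` as a translate of the basic slope function, when `A - B = -tp`. -/
theorem u_eq_tau (tp A B : W.Point) (hAB : A - B = -tp) :
    S.u A B = S.τ (-A)
      ((S.y - algebraMap K S.F (ptY (-tp))) / (S.x - algebraMap K S.F (ptX (-tp)))) := by
  rw [FunModel.u, FunModel.trN, FunModel.trN, hAB, map_div₀, map_sub, map_sub,
    AlgEquiv.commutes, AlgEquiv.commutes]

theorem ND_ne_zero (a b : K) :
    (S.y - algebraMap K S.F b) / (S.x - algebraMap K S.F a) ≠ 0 :=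
  div_ne_zero (y_sub_const_ne b) (x_sub_const_ne a)

theorem ordND_zero (a b : K) :
    S.ord 0 ((S.y - algebraMap K S.F b) / (S.x - algebraMap K S.F a)) = -1 := by
  rw [ord_div 0 (y_sub_const_ne b) (x_sub_const_ne a), ord_zero_y_sub_const,
    ord_zero_x_sub_const]
  ring

/-- The slope function has a simple pole at `tp`. -/
theorem ordND_tp {tp : W.Point} (htp0 : tp ≠ 0) :
    S.ord tp ((S.y - algebraMap K S.F (ptY (-tp))) / (S.x - algebraMap K S.F (ptX (-tp))))
      = -1 := by
  obtain ⟨x₀, y₀, h, rfl⟩ := point_exists_some htp0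
  rw [Affine.Point.neg_some, ptX_some, ptY_some]
  rcases eq_or_ne (Affine.Point.some _ _ h : W.Point) (-Affine.Point.some _ _ h) with h2 | h2
  · -- two-torsion point: numerator has order 1, denominator order 2
    have hy : W.negY x₀ y₀ = y₀ := by
      rw [Affine.Point.neg_some, Affine.Point.some.injEq] at h2
      exact h2.2.symm
    obtain ⟨h1, h2'⟩ := ord_two_torsion (S := S) h h2
    rw [hy, ord_div _ (y_sub_const_ne _) (x_sub_const_ne _), h1, h2']
    ring
  · -- otherwise the numerator is a unit and the denominator a uniformizer
    have hyne : y₀ - W.negY x₀ y₀ ≠ 0 := by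
      intro h0
      refine h2 ?_
      rw [Affine.Point.neg_some, Affine.Point.some.injEq]
      exact ⟨rfl, by linear_combination h0⟩
    have hordN : S.ord (Affine.Point.some _ _ h) (S.y - algebraMap K S.F (W.negY x₀ y₀)) = 0 := by
      refine ord_eq_zero_of_eval_ne
        ((Reg.of_le (S.ord_y_nonneg _ (Affine.Point.some_ne_zero h))).sub
          (Reg.algebraMap' _ le_rfl)) ?_
      rw [eval_sub _ (Reg.of_le (S.ord_y_nonneg _ (Affine.Point.some_ne_zero h)))
        (Reg.algebraMap' _ le_rfl), S.eval_y _ (Affine.Point.some_ne_zero h),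
        S.eval_algebraMap, ptY_some]
      exact hyne
    rw [ord_div _ (y_sub_const_ne _) (x_sub_const_ne _), hordN, ord_x_sub_eq_one h h2]
    ring

/-- The slope function is regular away from `0` and `tp`. -/
theorem ordND_nonneg {tp : W.Point} (htp0 : tp ≠ 0) {Q : W.Point} (hQ0 : Q ≠ 0)
    (hQt : Q ≠ tp) :
    0 ≤ S.ord Q ((S.y - algebraMap K S.F (ptY (-tp))) / (S.x - algebraMap K S.F (ptX (-tp)))) := by
  have hmt0 : (-tp : W.Point) ≠ 0 := neg_ne_zero.mpr htp0
  rcases eq_or_ne Q (-tp) with rfl | hQmt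
  · -- at `-tp`: numerator vanishes, denominator is a uniformizer
    have h2 : (-tp : W.Point) ≠ -(-tp) := by
      rw [neg_neg]
      intro h0
      exact hQt h0
    obtain ⟨x₀, y₀, h, he⟩ := point_exists_some hmt0
    rw [he] at h2 ⊢
    rw [ptX_some, ptY_some, ord_div _ (y_sub_const_ne _) (x_sub_const_ne _),
      ord_x_sub_eq_one h h2]
    have := ord_y_sub_pos' (S := S) (Affine.Point.some _ _ h) (Affine.Point.some_ne_zero h)
    rw [ptY_some] at this
    omega
  · -- elsewhere: numerator regular, denominator a unit
    have hordD : S.ord Q (S.x - algebraMap K S.F (ptX (-tp))) = 0 := by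
      refine ord_eq_zero_of_eval_ne
        ((Reg.of_le (S.ord_x_nonneg _ hQ0)).sub (Reg.algebraMap' _ le_rfl)) ?_
      rw [eval_sub _ (Reg.of_le (S.ord_x_nonneg _ hQ0)) (Reg.algebraMap' _ le_rfl),
        S.eval_x _ hQ0, S.eval_algebraMap]
      intro h0
      rcases eq_or_eq_neg_of_ptX_eq hQ0 hmt0 (sub_eq_zero.mp h0) with h1 | h1
      · exact hQmt h1
      · rw [neg_neg] at h1; exact hQt h1
    rw [ord_div _ (y_sub_const_ne _) (x_sub_const_ne _), hordD]
    have : 0 ≤ S.ord Q (S.y - algebraMap K S.F (ptY (-tp))) :=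
      ((Reg.of_le (S.ord_y_nonneg _ hQ0)).sub (Reg.algebraMap' _ le_rfl)).ord_of_ne
        (y_sub_const_ne _)
    omega

/-- The slope function has at worst simple poles. -/
theorem ordND_ge {tp : W.Point} (htp0 : tp ≠ 0) (Q : W.Point) :
    -1 ≤ S.ord Q ((S.y - algebraMap K S.F (ptY (-tp))) / (S.x - algebraMap K S.F (ptX (-tp)))) := by
  rcases eq_or_ne Q 0 with rfl | hQ0
  · rw [ordND_zero]
  rcases eq_or_ne Q tp with rfl | hQt
  · rw [ordND_tp htp0]
  · linarith [ordND_nonneg (S := S) htp0 hQ0 hQt]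

end UAnalysis

/-! ### The two basic evaluations at the origin -/

section Evals

variable {K : Type*} [Field K] {W : Affine K} {S : FunModel W}

theorem eval_ND_xy (a b : K) :
    S.eval 0 (((S.y - algebraMap K S.F b) / (S.x - algebraMap K S.F a)) * (S.x / S.y)) = 1 := by
  set N : S.F := S.y - algebraMap K S.F b with hN
  set D : S.F := S.x - algebraMap K S.F a with hD
  have hD0 : D ≠ 0 := x_sub_const_ne a
  have hy0 : S.y ≠ 0 := y_ne_zero
  have hden : S.y * D ≠ 0 := mul_ne_zero hy0 hD0
  set R : S.F := (algebraMap K S.F a * S.y - algebraMap K S.F b * S.x) / (S.y * D) with hR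
  have hid : N / D * (S.x / S.y) = 1 + R := by
    rw [hR, hN, hD]
    have hD0' : S.x - algebraMap K S.F a ≠ 0 := hD0
    field_simp
    ring
  have hordden : S.ord 0 (S.y * D) = -5 := by
    rw [S.ord_mul 0 _ _ hy0 hD0, S.ord_y_zero, hD, ord_zero_x_sub_const]
    norm_num
  have hRreg : Reg S 0 2 R := by
    rcases eq_or_ne (algebraMap K S.F a * S.y - algebraMap K S.F b * S.x) 0 with h0 | h0
    · rw [hR, h0, zero_div]
      exact Reg.zero _ _
    · have hnum : Reg S 0 (-3) (algebraMap K S.F a * S.y - algebraMap K S.F b * S.x) := by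
        have h1 : Reg S 0 (-3) (algebraMap K S.F a * S.y) := by
          simpa using (Reg.algebraMap' (S := S) (P := (0 : W.Point)) a le_rfl).mul
            (Reg.of_le (le_of_eq S.ord_y_zero.symm))
        have h2 : Reg S 0 (-2) (algebraMap K S.F b * S.x) := by
          simpa using (Reg.algebraMap' (S := S) (P := (0 : W.Point)) b le_rfl).mul
            (Reg.of_le (le_of_eq S.ord_x_zero.symm))
        exact h1.sub (h2.mono (by omega))
      refine Reg.of_le ?_
      rw [hR, ord_div 0 h0 hden, hordden]
      have := hnum.ord_of_ne h0
      omega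
  have hevR : S.eval 0 R = 0 := by
    rcases eq_or_ne R 0 with h0 | h0
    · rw [h0]; exact eval_zero 0
    · exact eval_of_pos h0 (by have := hRreg.ord_of_ne h0; omega)
  rw [hid, S.eval_add 0 _ _ (Reg.one le_rfl) (hRreg.mono (by omega)), eval_one, hevR, add_zero]

theorem eval_x_xy_sq : S.eval 0 (S.x * (S.x / S.y) ^ 2) = 1 := by
  have hy0 : S.y ≠ 0 := y_ne_zero
  set R : S.F := (algebraMap K S.F W.a₁ * S.x * S.y + algebraMap K S.F W.a₃ * S.y
    - algebraMap K S.F W.a₂ * S.x ^ 2 - algebraMap K S.F W.a₄ * S.x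
    - algebraMap K S.F W.a₆) / S.y ^ 2 with hR
  have hid : S.x * (S.x / S.y) ^ 2 = 1 + R := by
    rw [hR]
    field_simp
    linear_combination -S.equation
  have hRreg : Reg S 0 1 R := by
    rcases eq_or_ne (algebraMap K S.F W.a₁ * S.x * S.y + algebraMap K S.F W.a₃ * S.y
      - algebraMap K S.F W.a₂ * S.x ^ 2 - algebraMap K S.F W.a₄ * S.x
      - algebraMap K S.F W.a₆) 0 with h0 | h0
    · rw [hR, h0, zero_div]
      exact Reg.zero _ _
    · have hnum : Reg S 0 (-5) (algebraMap K S.F W.a₁ * S.x * S.y + algebraMap K S.F W.a₃ * S.y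
          - algebraMap K S.F W.a₂ * S.x ^ 2 - algebraMap K S.F W.a₄ * S.x
          - algebraMap K S.F W.a₆) := by
        have h1 : Reg S 0 (-5) (algebraMap K S.F W.a₁ * S.x * S.y) := by
          have := ((Reg.algebraMap' (S := S) (P := (0 : W.Point)) W.a₁ le_rfl).mul
            (Reg.of_le (le_of_eq S.ord_x_zero.symm))).mul
            (Reg.of_le (le_of_eq S.ord_y_zero.symm))
          simpa using this
        have h2 : Reg S 0 (-3) (algebraMap K S.F W.a₃ * S.y) := by
          simpa using (Reg.algebraMap' (S := S) (P := (0 : W.Point)) W.a₃ le_rfl).mul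
            (Reg.of_le (le_of_eq S.ord_y_zero.symm))
        have h3 : Reg S 0 (-4) (algebraMap K S.F W.a₂ * S.x ^ 2) := by
          have := (Reg.algebraMap' (S := S) (P := (0 : W.Point)) W.a₂ le_rfl).mul
            (Reg.of_le (f := S.x ^ 2) (le_of_eq (by rw [ord_pow 0 x_ne_zero 2, S.ord_x_zero])))
          simpa using this
        have h4 : Reg S 0 (-2) (algebraMap K S.F W.a₄ * S.x) := by
          simpa using (Reg.algebraMap' (S := S) (P := (0 : W.Point)) W.a₄ le_rfl).mul
            (Reg.of_le (le_of_eq S.ord_x_zero.symm))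
        exact (((h1.add (h2.mono (by omega))).sub (h3.mono (by omega))).sub
          (h4.mono (by omega))).sub (Reg.algebraMap' _ (by omega))
      have hden : S.ord 0 (S.y ^ 2) = -6 := by rw [ord_pow 0 hy0 2, S.ord_y_zero]; ring
      refine Reg.of_le ?_
      rw [hR, ord_div 0 h0 (pow_ne_zero 2 hy0), hden]
      have := hnum.ord_of_ne h0
      omega
  have hevR : S.eval 0 R = 0 := by
    rcases eq_or_ne R 0 with h0 | h0
    · rw [h0]; exact eval_zero 0
    · exact eval_of_pos h0 (by have := hRreg.ord_of_ne h0; omega)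
  rw [hid, S.eval_add 0 _ _ (Reg.one le_rfl) (hRreg.mono (by omega)), eval_one, hevR, add_zero]

end Evals

/-! ### Shifted evaluations -/

section Shifts

variable {K : Type*} [Field K] {W : Affine K} {S : FunModel W}

theorem ord_shift (A P : W.Point) (f : S.F) : S.ord P (S.τ (-A) f) = S.ord (P - A) f := by
  rw [S.ord_τ, sub_eq_add_neg]

theorem eval_shift (A P : W.Point) (f : S.F) : S.eval P (S.τ (-A) f) = S.eval (P - A) f := by
  rw [S.eval_τ, sub_eq_add_neg]

theorem tau_mul_shift (A B : W.Point) (f g : S.F) :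
    S.τ (-A) f * S.τ (-(B + A)) g = S.τ (-A) (f * S.τ (-B) g) := by
  have h1 : S.τ (-(B + A)) g = S.τ (-A) (S.τ (-B) g) := by
    have h2 : -(B + A) = -B + -A := by abel
    rw [h2, S.τ_add]
    rfl
  rw [h1, ← map_mul]

theorem eval_shift_term (A B : W.Point) (f g : S.F) :
    S.eval (B + A) (S.τ (-A) f * S.τ (-(B + A)) g) = S.eval B (f * S.τ (-B) g) := by
  rw [tau_mul_shift, eval_shift, add_sub_cancel_right]

theorem ord_shift_term (A B : W.Point) (f g : S.F) :
    S.ord (B + A) (S.τ (-A) f * S.τ (-(B + A)) g) = S.ord B (f * S.τ (-B) g) := by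
  rw [tau_mul_shift, ord_shift, add_sub_cancel_right]

/-- The local parameter at `B` given by translating `x/y`. -/
theorem ord_zB (B : W.Point) : S.ord B (S.τ (-B) (S.x / S.y)) = 1 := by
  rw [ord_shift, sub_self, ord_x_div_y]

theorem zB_ne_zero (B : W.Point) : S.τ (-B) (S.x / S.y) ≠ 0 :=
  tau_ne_zero (div_ne_zero x_ne_zero y_ne_zero)

theorem eval_zB (B : W.Point) : S.eval B (S.τ (-B) (S.x / S.y)) = 0 :=
  eval_of_pos (zB_ne_zero B) (by rw [ord_zB]; norm_num)

/-- Value of the basic product at `B = 0`. -/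
theorem evalV_zero (a b : K) :
    S.eval 0 (((S.y - algebraMap K S.F b) / (S.x - algebraMap K S.F a))
      * S.τ (-(0 : W.Point)) (S.x / S.y)) = 1 := by
  rw [neg_zero, S.τ_zero]
  exact eval_ND_xy a b

/-- Value of the basic product at `B ∉ {0, tp}`. -/
theorem evalV_other {tp : W.Point} (htp0 : tp ≠ 0) {B : W.Point} (hB0 : B ≠ 0) (hBt : B ≠ tp) :
    S.eval B (((S.y - algebraMap K S.F (ptY (-tp))) / (S.x - algebraMap K S.F (ptX (-tp))))
      * S.τ (-B) (S.x / S.y)) = 0 := by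
  rw [S.eval_mul B _ _ (Reg.of_le (ordND_nonneg htp0 hB0 hBt))
    (Reg.of_le (by rw [ord_zB]; omega)), eval_zB, mul_zero]

/-- Value of the `x`-translate term at `B = 0`. -/
theorem evalX_zero :
    S.eval 0 (S.x * (S.τ (-(0 : W.Point)) (S.x / S.y)) ^ 2) = 1 := by
  rw [neg_zero, S.τ_zero]
  exact eval_x_xy_sq

/-- Value of the `x`-translate term at `B ≠ 0`. -/
theorem evalX_other {B : W.Point} (hB0 : B ≠ 0) :
    S.eval B (S.x * (S.τ (-B) (S.x / S.y)) ^ 2) = 0 := by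
  have h2 : S.ord B ((S.τ (-B) (S.x / S.y)) ^ 2) = 2 := by
    rw [ord_pow B (zB_ne_zero B) 2, ord_zB]
    norm_num
  rw [S.eval_mul B _ _ (Reg.of_le (S.ord_x_nonneg B hB0)) (Reg.of_le (by rw [h2]; omega))]
  have : S.eval B ((S.τ (-B) (S.x / S.y)) ^ 2) = 0 :=
    eval_of_pos (pow_ne_zero 2 (zB_ne_zero B)) (by rw [h2]; omega)
  rw [this, mul_zero]

end Shifts

/-! ### Torsion bookkeeping -/

section Torsion

variable {K : Type*} [Field K] {W : Affine K}
variable {d : ℕ} [NeZero d] {t : W.Point}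

theorem t_ne_zero (ht : addOrderOf t = d) (hd2 : 2 ≤ d) : t ≠ 0 := by
  rintro rfl
  rw [addOrderOf_zero] at ht
  omega

theorem nsmul_mod (ht : addOrderOf t = d) (a : ℕ) : a • t = (a % d) • t := by
  rw [← ht, mod_addOrderOf_nsmul]

theorem nsmul_inj (ht : addOrderOf t = d) {a b : ℕ} (ha : a < d) (hb : b < d)
    (h : a • t = b • t) : a = b := by
  wlog hab : a ≤ b generalizing a b
  · exact (this hb ha h.symm (by omega)).symm
  have h1 : b • t = a • t + (b - a) • t := by
    rw [← add_nsmul]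
    congr 1
    omega
  rw [h] at h1
  have h2 : (b - a) • t = 0 := left_eq_add.mp h1
  have h3 : d ∣ b - a := by
    rw [← ht]
    exact addOrderOf_dvd_iff_nsmul_eq_zero.mpr h2
  have h4 : b - a = 0 := Nat.eq_zero_of_dvd_of_lt h3 (by omega) |>.symm ▸ rfl
  omega

theorem nsmul_eq_zero_iff (ht : addOrderOf t = d) {a : ℕ} (ha : a < d) :
    a • t = 0 ↔ a = 0 := by
  constructor
  · intro h
    exact nsmul_inj ht ha (by omega) (by simpa using h)
  · rintro rfl
    simp

end Torsion

/-! ### The residue pinning via the constant `𝔞` -/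

section Alpha

variable {K : Type*} [Field K] {W : Affine K} {S : FunModel W}

theorem alpha_pin {d : ℕ} [NeZero d] {t : W.Point}
    (ht : addOrderOf t = d) (hd2 : 2 ≤ d) {𝔞 : K}
    (h𝔞 : algebraMap K S.F 𝔞 = ∑ l ∈ Finset.range d, S.u (l • t) ((l + 1) • t)) :
    S.eval t (((S.y - algebraMap K S.F (ptY (-t))) / (S.x - algebraMap K S.F (ptX (-t))))
      * S.τ (-t) (S.x / S.y)) = -1 := by
  have ht0 : t ≠ 0 := t_ne_zero ht hd2
  set ND : S.F := (S.y - algebraMap K S.F (ptY (-t))) / (S.x - algebraMap K S.F (ptX (-t)))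
    with hND
  have husum : ∀ l : ℕ, S.u (l • t) ((l + 1) • t) = S.τ (-(l • t)) ND := by
    intro l
    refine u_eq_tau t _ _ ?_
    rw [succ_nsmul]
    abel
  have hNDne : ND ≠ 0 := ND_ne_zero _ _
  set q : ℕ → S.F := fun l => S.τ (-(l • t)) ND * S.τ (-t) (S.x / S.y) with hq
  have hshift : ∀ l : ℕ, S.eval t (q l) = S.eval (t - l • t)
      (ND * S.τ (-(t - l • t)) (S.x / S.y)) := by
    intro l
    have h1 := eval_shift_term (S := S) (l • t) (t - l • t) ND (S.x / S.y)
    rw [sub_add_cancel] at h1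
    exact h1
  have hordq : ∀ l : ℕ, Reg S t 0 (q l) := by
    intro l
    have h1 := ord_shift_term (S := S) (l • t) (t - l • t) ND (S.x / S.y)
    rw [sub_add_cancel] at h1
    refine Reg.of_le ?_
    rw [hq]
    rw [h1, S.ord_mul _ _ _ hNDne (zB_ne_zero _), ord_zB]
    have h2 := ordND_ge (S := S) ht0 (t - l • t)
    rw [← hND] at h2
    omega
  have hkey : S.eval t (algebraMap K S.F 𝔞 * S.τ (-t) (S.x / S.y)) =
      S.eval t (∑ l ∈ Finset.range d, q l) := by
    congr 1
    rw [h𝔞, Finset.sum_mul]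
    exact Finset.sum_congr rfl fun l _ => by rw [husum l]
  have hLHS : S.eval t (algebraMap K S.F 𝔞 * S.τ (-t) (S.x / S.y)) = 0 := by
    rw [S.eval_mul t _ _ (Reg.algebraMap' _ le_rfl) (Reg.of_le (by rw [ord_zB]; omega)),
      eval_zB, mul_zero]
  have hRHS : S.eval t (∑ l ∈ Finset.range d, q l) =
      ∑ l ∈ Finset.range d, S.eval t (q l) :=
    eval_sum t _ _ fun l _ => hordq l
  have hval : ∀ l ∈ Finset.range d, l ∉ ({0, 1} : Finset ℕ) → S.eval t (q l) = 0 := by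
    intro l hl hl01
    simp only [Finset.mem_insert, Finset.mem_singleton] at hl01
    push_neg at hl01
    rw [Finset.mem_range] at hl
    rw [hshift l]
    have hB0 : t - l • t ≠ 0 := by
      intro h0
      have h1 : (1 : ℕ) • t = l • t := by
        rw [one_nsmul]
        exact sub_eq_zero.mp h0
      exact hl01.2 (nsmul_inj ht (by omega) hl h1).symm
    have hBt : t - l • t ≠ t := by
      intro h0
      have h1 : l • t = 0 := by
        have := sub_eq_self.mp h0
        exact this
      exact hl01.1 ((nsmul_eq_zero_iff ht hl).mp h1)
    rw [hND]
    exact evalV_other ht0 hB0 hBt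
  have hval0 : q 0 = ND * S.τ (-t) (S.x / S.y) := by
    rw [hq]
    simp only [zero_nsmul, neg_zero, S.τ_zero, AlgEquiv.coe_refl, id_eq]
  have hval1 : S.eval t (q 1) = 1 := by
    rw [hshift 1, one_nsmul, sub_self, hND]
    exact evalV_zero _ _
  have hsplit : ∑ l ∈ Finset.range d, S.eval t (q l) =
      S.eval t (q 0) + S.eval t (q 1) := by
    rw [← Finset.sum_subset (s₁ := ({0, 1} : Finset ℕ)) ?_ hval]
    · rw [Finset.sum_pair (by norm_num : (0 : ℕ) ≠ 1)]
    · intro x hx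
      simp only [Finset.mem_insert, Finset.mem_singleton] at hx
      rw [Finset.mem_range]
      rcases hx with rfl | rfl <;> omega
  have hfinal : (0 : K) = S.eval t (ND * S.τ (-t) (S.x / S.y)) + 1 := by
    rw [← hval0, ← hval1, ← hsplit, ← hRHS, ← hkey, hLHS]
  linear_combination -hfinal

end Alpha

/-! ### ZMod-indexed torsion bookkeeping -/

section ZModT

variable {K : Type*} [Field K] {W : Affine K} {d : ℕ} [NeZero d] {t : W.Point}

theorem T_add (ht : addOrderOf t = d) (a b : ZMod d) :
    (a + b).val • t = a.val • t + b.val • t := by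
  rw [ZMod.val_add, ← nsmul_mod ht, add_nsmul]

theorem T_sub (ht : addOrderOf t = d) (l m : ZMod d) :
    m.val • t - l.val • t = (m - l).val • t := by
  have h0 : l + (m - l) = m := by ring
  have h1 := T_add ht l (m - l)
  rw [h0] at h1
  rw [h1]
  abel

theorem T_zero : ((0 : ZMod d)).val • t = 0 := by rw [ZMod.val_zero, zero_nsmul]

theorem T_one (hd2 : 2 ≤ d) : ((1 : ZMod d)).val • t = t := by
  rw [ZMod.val_one_eq_one_mod, Nat.mod_eq_of_lt (by omega), one_nsmul]

theorem T_eq_zero_iff (ht : addOrderOf t = d) (k : ZMod d) :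
    k.val • t = 0 ↔ k = 0 := by
  rw [nsmul_eq_zero_iff ht (ZMod.val_lt k), ZMod.val_eq_zero]

theorem T_eq_t_iff (ht : addOrderOf t = d) (hd2 : 2 ≤ d) (k : ZMod d) :
    k.val • t = t ↔ k = 1 := by
  constructor
  · intro h
    have h1 : k.val • t = (1 : ZMod d).val • t := by rw [h, T_one hd2]
    have h2 := nsmul_inj ht (ZMod.val_lt k) (ZMod.val_lt 1) h1
    exact ZMod.val_injective d h2
  · rintro rfl
    exact T_one hd2

theorem one_ne_zero_zmod (hd2 : 2 ≤ d) : (1 : ZMod d) ≠ 0 := by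
  intro h
  have := congrArg ZMod.val h
  rw [ZMod.val_one_eq_one_mod, Nat.mod_eq_of_lt (by omega), ZMod.val_zero] at this
  omega

theorem exists_zmod_rep (ht : addOrderOf t = d) {P : W.Point}
    (hP : P ∈ AddSubgroup.zmultiples t) : ∃ m : ZMod d, m.val • t = P := by
  obtain ⟨k, hk⟩ := AddSubgroup.mem_zmultiples_iff.mp hP
  refine ⟨(k : ZMod d), ?_⟩
  have h2 : (d : ℤ) ∣ k - ((k : ZMod d).val : ℤ) := by
    rw [← ZMod.intCast_zmod_eq_zero_iff_dvd]
    push_cast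
    rw [ZMod.natCast_val, ZMod.cast_id]
    ring
  have h3 : (k - ((k : ZMod d).val : ℤ)) • t = 0 := by
    rw [← addOrderOf_dvd_iff_zsmul_eq_zero, ht]
    exact h2
  have h4 : ((k : ZMod d).val : ℤ) • t = k • t := by
    rw [sub_zsmul] at h3
    have := sub_eq_zero.mp h3
    exact this.symm
  rw [← hk, ← h4, natCast_zsmul]

theorem mem_zmultiples_nsmul (a : ℕ) : (a • t : W.Point) ∈ AddSubgroup.zmultiples t :=
  AddSubgroup.mem_zmultiples_iff.mpr ⟨(a : ℤ), by rw [natCast_zsmul]⟩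

end ZModT
end FunModel

/-- The divisor `⟨t⟩ = ∑_{l ∈ ℤ/dℤ} [l • t]` attached to the cyclic subgroup generated
by a point `t` of a Weierstrass curve `W`, as a function `W.Point → ℤ`. -/
def cycDiv {K : Type*} [Field K] {W : WeierstrassCurve.Affine K} (t : W.Point) :
    W.Point → ℤ :=
  fun P => if P ∈ AddSubgroup.zmultiples t then 1 else 0

open FunModel

/-- Let `E` be an elliptic curve over a field `K` of odd characteristic, `d = 2^δ` with
`δ ≥ 1`, and `t` a point of order `d` on `E`. For scalars `(f_l)`, `(g_l)` indexed by
`ℤ/dℤ`, set `F = ∑ f_l u_l` and `G = ∑ g_l u_l` in `L(⟨t⟩)`, and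
`C = ∑ (f_l - f_{l-1})(g_l - g_{l-1}) x_l` where `x_l = x ∘ τ_{-lt}`. Then the difference
`F·G - C` lies in `L(⟨t⟩)`. -/
theorem mul_sub_C_mem_RRspace {K : Type*} [Field K] (hchar : ringChar K ≠ 2)
    {W : WeierstrassCurve.Affine K} [W.IsElliptic] (S : FunModel W)
    (δ : ℕ) (hδ : 1 ≤ δ) (d : ℕ) (hd : d = 2 ^ δ) [NeZero d]
    (t : W.Point) (ht : addOrderOf t = d)
    (𝔞 : K) (h𝔞 : algebraMap K S.F 𝔞 = ∑ l ∈ Finset.range d, S.u (l • t) ((l + 1) • t))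
    (ul xl : ZMod d → S.F)
    (hul : ∀ l : ZMod d, ul l = S.u (l.val • t) ((l.val + 1) • t)
      + algebraMap K S.F ((1 - 𝔞) / (d : K)))
    (hxl : ∀ l : ZMod d, xl l = S.trN (l.val • t) S.x)
    (f g : ZMod d → K) :
    (∑ l : ZMod d, f l • ul l) * (∑ l : ZMod d, g l • ul l)
        - ∑ l : ZMod d, ((f l - f (l - 1)) * (g l - g (l - 1))) • xl l
      ∈ S.RRset (cycDiv t) := by
  classical
  have hd2 : 2 ≤ d := by
    rw [hd]
    calc 2 = 2 ^ 1 := (pow_one 2).symm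
    _ ≤ 2 ^ δ := Nat.pow_le_pow_right (by omega) hδ
  have ht0 : t ≠ 0 := t_ne_zero ht hd2
  set ND : S.F := (S.y - algebraMap K S.F (ptY (-t))) / (S.x - algebraMap K S.F (ptX (-t)))
    with hND
  have hNDne : ND ≠ 0 := ND_ne_zero _ _
  have hul' : ∀ l : ZMod d, ul l = S.τ (-(l.val • t)) ND + algebraMap K S.F ((1 - 𝔞) / d) := by
    intro l
    rw [hul l, u_eq_tau t _ _ (by rw [succ_nsmul]; abel)]
  have hxl' : ∀ l : ZMod d, xl l = S.τ (-(l.val • t)) S.x := fun l => hxl l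
  set Fs : S.F := ∑ l : ZMod d, f l • ul l with hFs
  set Gs : S.F := ∑ l : ZMod d, g l • ul l with hGs
  set Cs : S.F := ∑ l : ZMod d, ((f l - f (l - 1)) * (g l - g (l - 1))) • xl l with hCs
  set H : S.F := Fs * Gs - Cs with hH
  suffices hsuff : ∀ P : W.Point, Reg S P (-(cycDiv t P)) H by
    rcases eq_or_ne H 0 with h0 | h0
    · exact Or.inl h0
    · exact Or.inr fun P => (hsuff P).ord_of_ne h0
  intro P
  by_cases hP : P ∈ AddSubgroup.zmultiples t
  swap
  · -- away from the subgroup: everything is regular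
    have hcyc : cycDiv t P = 0 := by rw [cycDiv, if_neg hP]
    rw [hcyc, neg_zero]
    have hB0 : ∀ l : ZMod d, P - l.val • t ≠ 0 := by
      intro l h0
      exact hP (sub_eq_zero.mp h0 ▸ mem_zmultiples_nsmul l.val)
    have hBt : ∀ l : ZMod d, P - l.val • t ≠ t := by
      intro l h0
      refine hP ?_
      have h1 : P = t + l.val • t := sub_eq_iff_eq_add.mp h0
      rw [h1]
      exact AddSubgroup.add_mem _ (AddSubgroup.mem_zmultiples t) (mem_zmultiples_nsmul l.val)
    have hulreg : ∀ l : ZMod d, Reg S P 0 (ul l) := by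
      intro l
      rw [hul' l]
      refine Reg.add (Reg.of_le ?_) (Reg.algebraMap' _ le_rfl)
      rw [ord_shift]
      exact ordND_nonneg ht0 (hB0 l) (hBt l)
    have hxreg : ∀ l : ZMod d, Reg S P 0 (xl l) := by
      intro l
      rw [hxl' l]
      refine Reg.of_le ?_
      rw [ord_shift]
      exact S.ord_x_nonneg _ (hB0 l)
    have hFreg : Reg S P 0 Fs := Reg.sum _ _ fun l _ => (hulreg l).smul (f l)
    have hGreg : Reg S P 0 Gs := Reg.sum _ _ fun l _ => (hulreg l).smul (g l)
    have hCreg : Reg S P 0 Cs := Reg.sum _ _ fun l _ => (hxreg l).smul _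
    have hFG : Reg S P 0 (Fs * Gs) := by simpa using hFreg.mul hGreg
    exact hFG.sub hCreg
  · -- on the subgroup: at worst a simple pole
    have hcyc : cycDiv t P = 1 := by rw [cycDiv, if_pos hP]
    rw [hcyc]
    obtain ⟨m, hPm⟩ := exists_zmod_rep ht hP
    set z : S.F := S.τ (-P) (S.x / S.y) with hz
    have hz0 : z ≠ 0 := zB_ne_zero P
    have hordz : S.ord P z = 1 := ord_zB P
    have hB : ∀ l : ZMod d, P - l.val • t = (m - l).val • t := by
      intro l
      rw [← hPm]
      exact T_sub ht l m
    have hulreg1 : ∀ l : ZMod d, Reg S P (-1) (ul l) := by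
      intro l
      rw [hul' l]
      refine Reg.add (Reg.of_le ?_) (Reg.algebraMap' _ (by omega))
      rw [ord_shift]
      exact ordND_ge ht0 _
    have hxreg2 : ∀ l : ZMod d, Reg S P (-2) (xl l) := by
      intro l
      rw [hxl' l]
      refine Reg.of_le ?_
      rw [ord_shift]
      rcases eq_or_ne (P - l.val • t) 0 with h0 | h0
      · rw [h0, S.ord_x_zero]
      · have := S.ord_x_nonneg _ h0
        omega
    rcases eq_or_ne H 0 with hH0 | hH0
    · exact Or.inl hH0
    have hFreg : Reg S P (-1) Fs := Reg.sum _ _ fun l _ => (hulreg1 l).smul (f l)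
    have hGreg : Reg S P (-1) Gs := Reg.sum _ _ fun l _ => (hulreg1 l).smul (g l)
    have hCreg : Reg S P (-2) Cs := Reg.sum _ _ fun l _ => (hxreg2 l).smul _
    have hHreg : Reg S P (-2) H := by
      refine Reg.sub ?_ hCreg
      simpa using hFreg.mul hGreg
    have hordH : -2 ≤ S.ord P H := hHreg.ord_of_ne hH0
    have hulzreg : ∀ l : ZMod d, Reg S P 0 (ul l * z) := by
      intro l
      simpa using (hulreg1 l).mul (Reg.of_le (le_of_eq hordz.symm))
    have hz2 : S.ord P (z ^ 2) = 2 := by rw [ord_pow P hz0 2, hordz]; norm_num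
    have hxz2reg : ∀ l : ZMod d, Reg S P 0 (xl l * z ^ 2) := by
      intro l
      simpa using (hxreg2 l).mul (Reg.of_le (le_of_eq hz2.symm))
    -- values of the `u`-terms against the local parameter
    have hterm : ∀ l : ZMod d, S.eval P (ul l * z) =
        (if l = m then 1 else if l = m - 1 then -1 else 0) := by
      intro l
      have hsplit : ul l * z = S.τ (-(l.val • t)) ND * z
          + algebraMap K S.F ((1 - 𝔞) / d) * z := by
        rw [hul' l]
        ring
      have hshift0 := eval_shift_term (S := S) (l.val • t) (P - l.val • t) ND (S.x / S.y)
      rw [sub_add_cancel] at hshift0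
      have hordmain : Reg S P 0 (S.τ (-(l.val • t)) ND * z) := by
        refine Reg.of_le ?_
        have h1 := ord_shift_term (S := S) (l.val • t) (P - l.val • t) ND (S.x / S.y)
        rw [sub_add_cancel] at h1
        rw [hz, h1, S.ord_mul _ _ _ hNDne (zB_ne_zero _), ord_zB]
        have h2 := ordND_ge (S := S) ht0 (P - l.val • t)
        rw [← hND] at h2
        omega
      have hordconst : Reg S P 0 (algebraMap K S.F ((1 - 𝔞) / d) * z) := by
        have h3 := (Reg.algebraMap' (S := S) (P := P) ((1 - 𝔞) / d) le_rfl).mul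
          (Reg.of_le (n := 0) (by rw [hordz]; omega : (0 : ℤ) ≤ S.ord P z))
        simpa using h3
      have hconstval : S.eval P (algebraMap K S.F ((1 - 𝔞) / d) * z) = 0 := by
        rw [S.eval_mul P _ _ (Reg.algebraMap' _ le_rfl)
          (Reg.of_le (by rw [hordz]; omega : (0 : ℤ) ≤ S.ord P z)), eval_zB, mul_zero]
      rw [hsplit, S.eval_add P _ _ hordmain hordconst, hconstval, add_zero, hz, hshift0, hB l]
      by_cases hlm : l = m
      · rw [if_pos hlm, show ((m - l : ZMod d)).val • t = (0 : W.Point) by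
          rw [show (m - l : ZMod d) = 0 by rw [hlm]; ring, T_zero], hND]
        exact evalV_zero _ _
      · rw [if_neg hlm]
        by_cases hlm1 : l = m - 1
        · rw [if_pos hlm1]
          rw [show ((m - l : ZMod d)).val • t = t by
            rw [show (m - l : ZMod d) = 1 by rw [hlm1]; ring, T_one hd2], hND]
          exact alpha_pin ht hd2 h𝔞
        · rw [if_neg hlm1]
          have hk0 : (m - l : ZMod d) ≠ 0 := by
            intro h0
            exact hlm (sub_eq_zero.mp h0).symm
          have hk1 : (m - l : ZMod d) ≠ 1 := by
            intro h1
            exact hlm1 (by linear_combination -h1)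
          have hB0 : ((m - l : ZMod d).val • t : W.Point) ≠ 0 :=
            fun h0 => hk0 ((T_eq_zero_iff ht _).mp h0)
          have hBt : ((m - l : ZMod d).val • t : W.Point) ≠ t :=
            fun h0 => hk1 ((T_eq_t_iff ht hd2 _).mp h0)
          rw [hND]
          exact evalV_other ht0 hB0 hBt
    -- values of the `x`-terms against the square of the local parameter
    have hxterm : ∀ l : ZMod d, S.eval P (xl l * z ^ 2) = (if l = m then 1 else 0) := by
      intro l
      have hzsq : z ^ 2 = S.τ (-P) ((S.x / S.y) ^ 2) := by rw [hz, map_pow]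
      have hshift0 := eval_shift_term (S := S) (l.val • t) (P - l.val • t) S.x ((S.x / S.y) ^ 2)
      rw [sub_add_cancel] at hshift0
      rw [hxl' l, hzsq, hshift0, hB l, map_pow]
      by_cases hlm : l = m
      · rw [if_pos hlm, show ((m - l : ZMod d)).val • t = (0 : W.Point) by
          rw [show (m - l : ZMod d) = 0 by rw [hlm]; ring, T_zero]]
        exact evalX_zero
      · rw [if_neg hlm]
        have hB0 : ((m - l : ZMod d).val • t : W.Point) ≠ 0 := by
          intro h0
          exact hlm (sub_eq_zero.mp ((T_eq_zero_iff ht _).mp h0)).symm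
        exact evalX_other hB0
    have hmm1 : m ≠ m - 1 := by
      intro h0
      exact one_ne_zero_zmod hd2 (by linear_combination h0)
    -- evaluation of `Fs * z`
    have hFz : Fs * z = ∑ l : ZMod d, f l • (ul l * z) := by
      rw [hFs, Finset.sum_mul]
      exact Finset.sum_congr rfl fun l _ => smul_mul_assoc _ _ _
    have hGz : Gs * z = ∑ l : ZMod d, g l • (ul l * z) := by
      rw [hGs, Finset.sum_mul]
      exact Finset.sum_congr rfl fun l _ => smul_mul_assoc _ _ _
    have hCz : Cs * z ^ 2 =
        ∑ l : ZMod d, ((f l - f (l - 1)) * (g l - g (l - 1))) • (xl l * z ^ 2) := by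
      rw [hCs, Finset.sum_mul]
      exact Finset.sum_congr rfl fun l _ => smul_mul_assoc _ _ _
    have hevalFz : ∀ (c : ZMod d → K), S.eval P (∑ l : ZMod d, c l • (ul l * z))
        = c m - c (m - 1) := by
      intro c
      rw [eval_sum P _ _ (fun l _ => (hulzreg l).smul (c l))]
      have hvals : ∀ l : ZMod d, S.eval P (c l • (ul l * z)) =
          c l * (if l = m then 1 else if l = m - 1 then -1 else 0) := fun l => by
        rw [eval_smul P _ (hulzreg l), hterm l]
      rw [Finset.sum_congr rfl fun l _ => hvals l,
        ← Finset.sum_subset (Finset.subset_univ {m, m - 1}) ?_]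
      · rw [Finset.sum_pair hmm1, if_pos rfl, if_neg (Ne.symm hmm1), if_pos rfl]
        ring
      · intro x _ hx
        simp only [Finset.mem_insert, Finset.mem_singleton] at hx
        push_neg at hx
        rw [if_neg hx.1, if_neg hx.2, mul_zero]
    have hevalCz : S.eval P (∑ l : ZMod d,
        ((f l - f (l - 1)) * (g l - g (l - 1))) • (xl l * z ^ 2))
        = (f m - f (m - 1)) * (g m - g (m - 1)) := by
      rw [eval_sum P _ _ (fun l _ => (hxz2reg l).smul _)]
      have hvals : ∀ l : ZMod d, S.eval P (((f l - f (l - 1)) * (g l - g (l - 1))) •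
          (xl l * z ^ 2)) = ((f l - f (l - 1)) * (g l - g (l - 1))) *
            (if l = m then 1 else 0) := fun l => by
        rw [eval_smul P _ (hxz2reg l), hxterm l]
      rw [Finset.sum_congr rfl fun l _ => hvals l,
        ← Finset.sum_subset (Finset.subset_univ {m}) ?_]
      · rw [Finset.sum_singleton, if_pos rfl, mul_one]
      · intro x _ hx
        simp only [Finset.mem_singleton] at hx
        rw [if_neg hx, mul_zero]
    -- the key vanishing
    have hFzreg : Reg S P 0 (Fs * z) := by
      simpa using hFreg.mul (Reg.of_le (le_of_eq hordz.symm))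
    have hGzreg : Reg S P 0 (Gs * z) := by
      simpa using hGreg.mul (Reg.of_le (le_of_eq hordz.symm))
    have hCzreg : Reg S P 0 (Cs * z ^ 2) := by
      simpa using hCreg.mul (Reg.of_le (le_of_eq hz2.symm))
    have hHz2 : H * z ^ 2 = (Fs * z) * (Gs * z) - Cs * z ^ 2 := by
      rw [hH]
      ring
    have hevalH : S.eval P (H * z ^ 2) = 0 := by
      rw [hHz2, eval_sub P (by simpa using hFzreg.mul hGzreg) hCzreg,
        S.eval_mul P _ _ hFzreg hGzreg, hFz, hGz, hevalFz f, hevalFz g, hCz, hevalCz]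
      ring
    have hHz2ne : H * z ^ 2 ≠ 0 := mul_ne_zero hH0 (pow_ne_zero 2 hz0)
    have hordHz2 : S.ord P (H * z ^ 2) = S.ord P H + 2 := by
      rw [S.ord_mul P _ _ hH0 (pow_ne_zero 2 hz0), hz2]
    have hpos : 0 < S.ord P (H * z ^ 2) :=
      ord_pos_of_eval_eq hHz2ne (by omega) hevalH
    exact Reg.of_le (by omega)
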